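/- Let θ ∈ (0,1), b(x) ≥ 0, and μ = (1-θ)²/(θ(1+θ-2√θ)). Suppose z < 0, w ∈ ℝ with k := w/z ∈ [-1/σ, 1] (σ as in context), and let λ₁ = ((1-θ)k+1+θ)z/2, v = (k+1)z/2, ρ^θ = θ(k-1)z/2. Then for any a with |a| ≤ μ·b(x), one has b(x)·λ₁·z - a·ρ^θ·v ≥ 0. -/
import Mathlib


set_option maxHeartbeats 1000000 in
theorem stmt10 (θ : ℝ) (hθ : θ ∈ Set.Ioo (0:ℝ) 1) (bx : ℝ) (hb : 0 ≤ bx)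
    (μ σ : ℝ)
    (hμ : μ = (1 - θ) ^ 2 / (θ * (1 + θ - 2 * Real.sqrt θ)))
    (hσ : σ = (1 - θ) / ((1 - Real.sqrt θ) * (2 * Real.sqrt (θ + 1) + Real.sqrt θ - 1)))
    (z w : ℝ) (hz : z < 0) (hk : w / z ∈ Set.Icc (-1 / σ) 1)
    (k v ρθ lam₁ : ℝ) (hkk : k = w / z)
    (hlam : lam₁ = ((1 - θ) * k + 1 + θ) * z / 2)
    (hv : v = (k + 1) * z / 2) (hρθ : ρθ = θ * (k - 1) * z / 2)
    (a : ℝ) (ha : |a| ≤ μ * bx) :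
    0 ≤ bx * lam₁ * z - a * ρθ * v := by
  obtain ⟨hθ0, hθ1⟩ := hθ
  obtain ⟨s, hsdef⟩ : ∃ s, Real.sqrt θ = s := ⟨_, rfl⟩
  obtain ⟨t, htdef⟩ : ∃ t, Real.sqrt (θ + 1) = t := ⟨_, rfl⟩
  rw [hsdef] at hμ hσ
  rw [htdef] at hσ
  have hs2 : s ^ 2 = θ := by rw [← hsdef]; exact Real.sq_sqrt hθ0.le
  have hs0 : 0 < s := by rw [← hsdef]; exact Real.sqrt_pos.mpr hθ0
  have hs1 : s < 1 := by nlinarith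
  have ht0 : 0 ≤ t := by rw [← htdef]; exact Real.sqrt_nonneg _
  have ht2 : t ^ 2 = θ + 1 := by rw [← htdef]; exact Real.sq_sqrt (by linarith)
  have ht1 : 1 ≤ t := by nlinarith
  -- μ * θ = (1+s)^2
  have hd : 1 + θ - 2 * s = (1 - s) ^ 2 := by nlinarith
  have hμθ : μ * θ = (1 + s) ^ 2 := by
    rw [hμ, hd, div_mul_eq_mul_div, div_eq_iff (mul_pos hθ0 (pow_pos (by linarith : (0:ℝ) < 1 - s) 2)).ne']
    linear_combination (θ * (2 - θ - s ^ 2)) * hs2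
  clear hμ
  -- μ ≥ 0
  have hμ0 : 0 ≤ μ := by nlinarith [hμθ, sq_nonneg (1 + s)]
  -- σ value
  have hσeq : σ = (1 + s) / (2 * t + s - 1) := by
    rw [hσ, show (1:ℝ) - θ = (1 - s) * (1 + s) by nlinarith]
    rw [mul_div_mul_left _ _ (by linarith : (1:ℝ) - s ≠ 0)]
  have hden : 0 < 2 * t + s - 1 := by linarith
  -- k bounds
  have hkub : k ≤ 1 := by rw [hkk]; exact hk.2
  have hklb : -(2 * t + s - 1) ≤ (1 + s) * k := by
    have h1 : -1 / σ ≤ k := by rw [hkk]; exact hk.1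
    rw [hσeq] at h1
    have h2 : -1 / ((1 + s) / (2 * t + s - 1)) = -(2 * t + s - 1) / (1 + s) := by
      field_simp
    rw [h2, div_le_iff₀ (by linarith : (0:ℝ) < 1 + s)] at h1
    linarith [h1]
  clear hσ hσeq hk hkk
  -- key inequality
  have key : (1 + s) ^ 2 * |k ^ 2 - 1| ≤ 2 * ((1 - θ) * k + 1 + θ) := by
    rcases le_or_gt (k ^ 2) 1 with hc | hc
    · rw [abs_of_nonpos (by linarith)]
      have hid2 : 2 * ((1 - θ) * k + 1 + θ) - (1 + s) ^ 2 * (1 - k ^ 2) =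
          ((1 + s) * k + (1 - s)) ^ 2 := by linear_combination (2 * k - 2) * hs2
      linarith [sq_nonneg ((1 + s) * k + (1 - s))]
    · rw [abs_of_pos (by linarith)]
      have hf1 : 0 ≤ (1 + s) * k + (2 * t + s - 1) := by linarith
      have hf2 : 0 ≤ (2 * t + 1 - s) - (1 + s) * k := by
        have h3 : 0 ≤ (1 + s) * (1 - k) := by
          apply mul_nonneg <;> linarith
        nlinarith
      have hid : 2 * ((1 - θ) * k + 1 + θ) - (1 + s) ^ 2 * (k ^ 2 - 1) =
          ((1 + s) * k + (2 * t + s - 1)) * ((2 * t + 1 - s) - (1 + s) * k) := by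
        linear_combination (2 * k + 2) * hs2 - 4 * ht2
      linarith [mul_nonneg hf1 hf2]
  -- bound the a term
  have hstep : a * (θ * (k ^ 2 - 1)) ≤ bx * ((1 + s) ^ 2 * |k ^ 2 - 1|) := by
    calc a * (θ * (k ^ 2 - 1)) ≤ |a * (θ * (k ^ 2 - 1))| := le_abs_self _
      _ = |a| * (θ * |k ^ 2 - 1|) := by
          rw [abs_mul, abs_mul, abs_of_pos hθ0]
      _ ≤ μ * bx * (θ * |k ^ 2 - 1|) := by
          have : 0 ≤ θ * |k ^ 2 - 1| := by positivity
          exact mul_le_mul_of_nonneg_right ha this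
      _ = bx * ((1 + s) ^ 2 * |k ^ 2 - 1|) := by
          rw [show μ * bx * (θ * |k ^ 2 - 1|) = bx * (μ * θ * |k ^ 2 - 1|) by ring, hμθ]
  have hkey2 : bx * ((1 + s) ^ 2 * |k ^ 2 - 1|) ≤ bx * (2 * ((1 - θ) * k + 1 + θ)) :=
    mul_le_mul_of_nonneg_left key hb
  have hz2 : 0 ≤ z ^ 2 := sq_nonneg z
  rw [hlam, hv, hρθ]
  have hfin := mul_le_mul_of_nonneg_right (hstep.trans hkey2) hz2
  clear hstep hkey2 key ha
  nlinarith [hfin]
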